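/- Let R = k[x_1,...,x_m] with the standard Z^m-multigrading and let L be a Noetherian multigraded R-module. For every i ≥ 1 and every α ∈ Z^m, if the multigraded Betti number β_{i,α}(L) is nonzero then α belongs to the LCM-lattice Λ(L). -/

import Mathlib

/-!
STATEMENT 2: Let `R = k[x_1,...,x_m]` with the standard `ℤ^m`-multigrading and `L` a
Noetherian multigraded `R`-module, with minimal multigraded free resolution `F` (whose
first homological degree has basis `S = F.B 1`, the basis of the minimal presentation
`Φ : E → G`).  For every `i ≥ 1` and every `α ∈ ℤ^m`, if `β_{i,α}(L) ≠ 0` then `α`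
belongs to the LCM-lattice `Λ(L)`, i.e. `α` is the join (componentwise maximum) of the
multidegrees of a (nonempty) subset of `S`.
-/

open MvPolynomial

open MvPolynomial

/-- A minimal multigraded free resolution of a module `L` over the polynomial ring
`R = k[x_1, ..., x_m]` with its standard `ℤ^m`-multigrading.  `B i` is the (finite) set of
multihomogeneous basis elements of the `i`-th free module, of multidegrees `deg i`; the
differentials and the augmentation `F_0 → L` form an exact sequence, each entry of each
differential is multihomogeneous of the appropriate degree (an entry is a scalar multiple
of the monomial whose exponent is the difference of the degrees of the corresponding basis
elements, and vanishes if that difference is not componentwise nonnegative) and lies in the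
irrelevant maximal ideal (its constant coefficient vanishes, i.e. minimality). -/
structure MinimalMultigradedFreeResolution (k : Type) [Field k] (m : ℕ)
    (L : Type) [AddCommGroup L] [Module (MvPolynomial (Fin m) k) L] where
  B : ℕ → Type
  finiteB : ∀ i, Finite (B i)
  deg : (i : ℕ) → B i → (Fin m → ℤ)
  d : (i : ℕ) → (B (i + 1) →₀ MvPolynomial (Fin m) k) →ₗ[MvPolynomial (Fin m) k]
      (B i →₀ MvPolynomial (Fin m) k)
  aug : (B 0 →₀ MvPolynomial (Fin m) k) →ₗ[MvPolynomial (Fin m) k] L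
  aug_surjective : Function.Surjective aug
  exact_at_zero : LinearMap.ker aug = LinearMap.range (d 0)
  exact_at_succ : ∀ i, LinearMap.ker (d i) = LinearMap.range (d (i + 1))
  minimal : ∀ (i : ℕ) (b : B (i + 1)) (b' : B i),
      MvPolynomial.coeff 0 (d i (Finsupp.single b 1) b') = 0
  homogeneous : ∀ (i : ℕ) (b : B (i + 1)) (b' : B i), ∃ c : k,
      d i (Finsupp.single b 1) b' =
        c • MvPolynomial.monomial
          (Finsupp.equivFunOnFinite.symm fun j => (deg (i + 1) b j - deg i b' j).toNat) 1 ∧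
      (¬ deg i b' ≤ deg (i + 1) b → c = 0)

/-- The multigraded Betti number `β_{i,α}(L)`: the number of basis elements of
multidegree `α` in homological degree `i` of a minimal multigraded free resolution. -/
noncomputable def MinimalMultigradedFreeResolution.betti {k : Type} [Field k] {m : ℕ}
    {L : Type} [AddCommGroup L] [Module (MvPolynomial (Fin m) k) L]
    (F : MinimalMultigradedFreeResolution k m L) (i : ℕ) (α : Fin m → ℤ) : ℕ :=
  Nat.card {b : F.B i // F.deg i b = α}

namespace MinimalMultigradedFreeResolution

variable {k : Type} [Field k] {m : ℕ} {L : Type} [AddCommGroup L]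
  [Module (MvPolynomial (Fin m) k) L] (F : MinimalMultigradedFreeResolution k m L)

/-- Every coordinate of anything in the image of a differential has zero constant
coefficient (minimality). -/
lemma coeff_zero_d (n : ℕ) (x : F.B (n+1) →₀ MvPolynomial (Fin m) k) (b' : F.B n) :
    MvPolynomial.coeff 0 (F.d n x b') = 0 := by
  induction x using Finsupp.induction_linear with
  | zero => simp
  | add f g hf hg => rw [map_add, Finsupp.add_apply, MvPolynomial.coeff_add, hf, hg, add_zero]
  | single a p =>
    have h : (Finsupp.single a p) = p • Finsupp.single a (1 : MvPolynomial (Fin m) k) := by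
      rw [Finsupp.smul_single', mul_one]
    have hmul : MvPolynomial.coeff 0 (p * F.d n (Finsupp.single a 1) b') = 0 := by
      have := map_mul (MvPolynomial.constantCoeff (σ := Fin m) (R := k)) p
        (F.d n (Finsupp.single a 1) b')
      simp only [MvPolynomial.constantCoeff_eq] at this
      rw [this, F.minimal n a b', mul_zero]
    rw [h, map_smul, Finsupp.smul_apply, smul_eq_mul, hmul]

/-- The set of joins of nonempty subsets of the degrees in homological degree 1
(the LCM lattice) is closed under joins. -/
lemma lattice_supClosed :
    ∀ᵉ (x ∈ {γ : Fin m → ℤ | ∃ A : Finset (F.B 1), A.Nonempty ∧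
        A.sup (fun a => (↑(F.deg 1 a) : WithBot (Fin m → ℤ))) = ↑γ})
      (y ∈ {γ : Fin m → ℤ | ∃ A : Finset (F.B 1), A.Nonempty ∧
        A.sup (fun a => (↑(F.deg 1 a) : WithBot (Fin m → ℤ))) = ↑γ}),
      x ⊔ y ∈ {γ : Fin m → ℤ | ∃ A : Finset (F.B 1), A.Nonempty ∧
        A.sup (fun a => (↑(F.deg 1 a) : WithBot (Fin m → ℤ))) = ↑γ} := by
  classical
  rintro x ⟨A₁, hA₁, hs₁⟩ y ⟨A₂, hA₂, hs₂⟩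
  exact ⟨A₁ ∪ A₂, hA₁.mono Finset.subset_union_left,
    by rw [Finset.sup_union, hs₁, hs₂, WithBot.coe_sup]⟩

/-- Key lemma: the degree of every basis element in homological degree `n+1` is a join of
a nonempty set of degrees from homological degree `1`. -/
lemma deg_mem_lattice (n : ℕ) (b : F.B (n+1)) :
    ∃ A : Finset (F.B 1), A.Nonempty ∧
      A.sup (fun a => (↑(F.deg 1 a) : WithBot (Fin m → ℤ))) = ↑(F.deg (n+1) b) := by
  induction n with
  | zero => exact ⟨{b}, Finset.singleton_nonempty b, Finset.sup_singleton⟩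
  | succ n ih =>
    classical
    set α := F.deg (n+2) b with hαdef
    set v := F.d (n+1) (Finsupp.single b 1) with hvdef
    -- the image of `b` is nonzero
    have hv_ne : v ≠ 0 := by
      intro h
      have hker : Finsupp.single b (1 : MvPolynomial (Fin m) k) ∈
          LinearMap.ker (F.d (n+1)) := LinearMap.mem_ker.mpr h
      rw [F.exact_at_succ (n+1)] at hker
      obtain ⟨z, hz⟩ := hker
      have h0 := F.coeff_zero_d (n+2) z b
      rw [hz] at h0
      simp at h0
    have hsupp : v.support.Nonempty := Finsupp.support_nonempty_iff.mpr hv_ne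
    -- homogeneity data
    set cf : F.B (n+1) → k := fun b' => (F.homogeneous (n+1) b b').choose with hcf
    set μ : F.B (n+1) → (Fin m →₀ ℕ) := fun b' =>
      Finsupp.equivFunOnFinite.symm fun t => (α t - F.deg (n+1) b' t).toNat with hμ
    have hspec : ∀ b', v b' = cf b' • MvPolynomial.monomial (μ b') 1 ∧
        (¬ F.deg (n+1) b' ≤ α → cf b' = 0) := fun b' =>
      (F.homogeneous (n+1) b b').choose_spec
    have hcf_ne : ∀ b' ∈ v.support, cf b' ≠ 0 := by
      intro b' hb' hc
      apply Finsupp.mem_support_iff.mp hb'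
      rw [(hspec b').1, hc, zero_smul]
    have hle : ∀ b' ∈ v.support, F.deg (n+1) b' ≤ α := by
      intro b' hb'
      by_contra h
      exact hcf_ne b' hb' ((hspec b').2 h)
    -- the join of the degrees of the support
    set β := v.support.sup' hsupp (fun b' => F.deg (n+1) b') with hβ
    have hβle : β ≤ α := Finset.sup'_le _ _ hle
    have hβα : β = α := by
      by_contra hne2
      obtain ⟨j, hj⟩ : ∃ j, β j < α j := by
        by_contra h
        push_neg at h
        exact hne2 (le_antisymm hβle fun j => h j)
      have hltj : ∀ b' ∈ v.support, F.deg (n+1) b' j < α j := by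
        intro b' hb'
        exact lt_of_le_of_lt ((Finset.le_sup' (fun b' => F.deg (n+1) b') hb') j) hj
      have hμj : ∀ b' ∈ v.support, Finsupp.single j 1 ≤ μ b' := by
        intro b' hb'
        rw [Finsupp.single_le_iff]
        have := hltj b' hb'
        simp only [hμ, Finsupp.equivFunOnFinite_symm_apply_apply]
        omega
      -- divide v by X j
      have hcf0 : ∀ b', b' ∉ v.support → cf b' = 0 := by
        intro b' hb'
        have h0 : v b' = 0 := Finsupp.notMem_support_iff.mp hb'
        rw [(hspec b').1] at h0
        rcases smul_eq_zero.mp h0 with h | h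
        · exact h
        · exact absurd h (MvPolynomial.monomial_eq_zero.not.mpr one_ne_zero)
      set w : F.B (n + 1) →₀ MvPolynomial (Fin m) k :=
        Finsupp.onFinset v.support
          (fun b' => cf b' • MvPolynomial.monomial (μ b' - Finsupp.single j 1) 1)
          (by
            intro b' hb'
            by_contra hmem
            apply hb'
            show cf b' • MvPolynomial.monomial (μ b' - Finsupp.single j 1) 1 = 0
            rw [hcf0 b' hmem, zero_smul]) with hw
      have hvw : v = (MvPolynomial.X j : MvPolynomial (Fin m) k) • w := by
        refine Finsupp.ext fun b' => ?_
        rw [Finsupp.smul_apply, hw, Finsupp.onFinset_apply, (hspec b').1]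
        by_cases hb' : b' ∈ v.support
        · rw [smul_eq_mul, MvPolynomial.smul_monomial, MvPolynomial.smul_monomial,
            ← pow_one (MvPolynomial.X j (R := k)), ← MvPolynomial.monomial_single_add,
            add_tsub_cancel_of_le (hμj b' hb')]
        · rw [hcf0 b' hb', zero_smul, zero_smul, smul_zero]
      -- d n kills w
      have hdv : F.d n v = 0 := by
        have : v ∈ LinearMap.ker (F.d n) := by
          rw [F.exact_at_succ n]
          exact ⟨Finsupp.single b 1, rfl⟩
        exact LinearMap.mem_ker.mp this
      have hdw : F.d n w = 0 := by
        rw [hvw, map_smul] at hdv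
        refine Finsupp.ext fun b' => ?_
        have h2 := DFunLike.congr_fun hdv b'
        rw [Finsupp.smul_apply, smul_eq_mul, Finsupp.zero_apply] at h2
        rcases mul_eq_zero.mp h2 with h | h
        · exact absurd h (MvPolynomial.X_ne_zero j)
        · rw [Finsupp.zero_apply]; exact h
      -- w is a boundary
      have hwmem : w ∈ LinearMap.range (F.d (n+1)) := by
        rw [← F.exact_at_succ n]
        exact LinearMap.mem_ker.mpr hdw
      obtain ⟨y, hy⟩ := hwmem
      -- single b 1 - X j • y is a boundary, contradiction with minimality
      have hkermem : Finsupp.single b (1 : MvPolynomial (Fin m) k) - (MvPolynomial.X j : MvPolynomial (Fin m) k) • y ∈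
          LinearMap.ker (F.d (n+1)) := by
        rw [LinearMap.mem_ker, map_sub, map_smul, hy, ← hvdef, hvw, sub_self]
      rw [F.exact_at_succ (n+1)] at hkermem
      obtain ⟨z, hz⟩ := hkermem
      have h0 := F.coeff_zero_d (n+2) z b
      rw [hz] at h0
      have hX : MvPolynomial.coeff (0 : Fin m →₀ ℕ) (MvPolynomial.X j * y b) = 0 := by
        have := map_mul (MvPolynomial.constantCoeff (σ := Fin m) (R := k))
          (MvPolynomial.X j) (y b)
        simp only [MvPolynomial.constantCoeff_eq] at this
        rw [this, MvPolynomial.coeff_zero_X, zero_mul]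
      rw [Finsupp.sub_apply, Finsupp.smul_apply, Finsupp.single_eq_same, smul_eq_mul,
        MvPolynomial.coeff_sub, hX, sub_zero] at h0
      simp at h0
    -- conclude by join-closedness
    have hmem := Finset.sup'_mem
      {γ : Fin m → ℤ | ∃ A : Finset (F.B 1), A.Nonempty ∧
        A.sup (fun a => (↑(F.deg 1 a) : WithBot (Fin m → ℤ))) = ↑γ}
      (F.lattice_supClosed) v.support hsupp (fun b' => F.deg (n+1) b')
      (fun b' _ => ih b')
    rwa [← hβ, hβα] at hmem

end MinimalMultigradedFreeResolution

theorem betti_nonzero_implies_mem_LCM_lattice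
    {k : Type} [Field k] {m : ℕ} {L : Type} [AddCommGroup L]
    [Module (MvPolynomial (Fin m) k) L]
    (F : MinimalMultigradedFreeResolution k m L) :
    ∀ i : ℕ, 1 ≤ i → ∀ α : Fin m → ℤ, F.betti i α ≠ 0 →
      ∃ A : Finset (F.B 1), A.Nonempty ∧
        A.sup (fun a => (↑(F.deg 1 a) : WithBot (Fin m → ℤ))) =
          (↑α : WithBot (Fin m → ℤ)) := by
  intro i hi α hβ
  have hfin : Finite (F.B i) := F.finiteB i
  have hne : Nonempty {b : F.B i // F.deg i b = α} := by
    by_contra h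
    rw [not_nonempty_iff] at h
    exact hβ (by simp [MinimalMultigradedFreeResolution.betti, Nat.card_eq_zero])
  obtain ⟨⟨b, hb⟩⟩ := hne
  obtain ⟨n, rfl⟩ : ∃ n, i = n + 1 := ⟨i - 1, (Nat.succ_pred_eq_of_pos hi).symm⟩
  rw [← hb]
  exact F.deg_mem_lattice n b
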